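/- Let B : ℕ → ℕ be a finitely supported nonincreasing sequence with total sum q (q = Σ_n B(n), the number of blocks of the Young diagram B). Suppose C assigns to each n ≥ 1 a finitely supported nonincreasing sequence such that C(1) is the zero sequence, C(2) = B, and for every n ≥ 3, C(n) is the lexicographic maximum, over all m with 2 ≤ m ≤ n−1 and all lists of positive integers j_1, …, j_m with j_1 + ⋯ + j_m = n, of merge(C(m), C(j_1) ⊕ ⋯ ⊕ C(j_m)). Then for every n ≥ 1 the total sum of the entries of C(n) equals q·(n − 1). -/

import Mathlib

/-- A sequence is finitely supported if it is eventually zero. -/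
def FinSupported (A : ℕ → ℕ) : Prop :=
  ∃ N, ∀ n, N ≤ n → A n = 0

/-- The lexicographic order on sequences: `A ≤ B` iff `A = B` or at the smallest index
where they differ, the entry of `A` is smaller. -/
def LexLe (A B : ℕ → ℕ) : Prop :=
  A = B ∨ ∃ n, (∀ m, m < n → A m = B m) ∧ A n < B n

/-- The length of a finitely supported sequence: the least `N` such that `X n = 0`
for all `n ≥ N`. -/
noncomputable def len (X : ℕ → ℕ) : ℕ :=
  sInf {N | ∀ n, N ≤ n → X n = 0}

/-- The multiset of nonzero values (with multiplicity) of a finitely supported sequence. -/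
noncomputable def vals (A : ℕ → ℕ) : Multiset ℕ :=
  Multiset.filter (fun x => x ≠ 0) (((List.range (len A)).map A : List ℕ) : Multiset ℕ)

/-- Merge of two finitely supported sequences: the nonincreasing finitely supported
sequence whose multiset of nonzero values is the multiset sum of those of `A` and `B`
(concatenate and sort into nonincreasing order). -/
noncomputable def merge (A B : ℕ → ℕ) : ℕ → ℕ :=
  fun n => (((vals A + vals B).sort (· ≤ ·)).reverse).getD n 0

lemma len_spec {A : ℕ → ℕ} (h : FinSupported A) : ∀ n, len A ≤ n → A n = 0 :=
  Nat.sInf_mem h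

lemma getD_sum (l : List ℕ) : ∑ i ∈ Finset.range l.length, l.getD i 0 = l.sum := by
  induction l with
  | nil => simp
  | cons a t ih =>
    rw [List.length_cons, Finset.sum_range_succ']
    simp only [List.getD_cons_succ, List.getD_cons_zero, List.sum_cons, ih, Nat.add_comm]

lemma finsum_eq_range {A : ℕ → ℕ} (h : FinSupported A) :
    ∑ᶠ k, A k = ∑ i ∈ Finset.range (len A), A i := by
  apply finsum_eq_sum_of_support_subset
  intro x hx
  simp only [Finset.coe_range, Set.mem_Iio]
  by_contra hc
  exact hx (len_spec h x (le_of_not_gt hc))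

lemma vals_sum {A : ℕ → ℕ} (h : FinSupported A) : (vals A).sum = ∑ᶠ k, A k := by
  rw [finsum_eq_range h, vals]
  have key := Multiset.sum_filter_add_sum_filter_not (s := (((List.range (len A)).map A : List ℕ) : Multiset ℕ)) (fun x => x ≠ 0)
  have h0 : (Multiset.filter (fun x => ¬ x ≠ 0) (((List.range (len A)).map A : List ℕ) : Multiset ℕ)).sum = 0 := by
    apply Multiset.sum_eq_zero
    intro x hx
    simpa using (Multiset.mem_filter.mp hx).2
  rw [h0, add_zero] at key
  rw [key, Multiset.sum_coe]
  simp [Finset.sum_range, Finset.range, Multiset.range]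

lemma merge_finsum {A B : ℕ → ℕ} (hA : FinSupported A) (hB : FinSupported B) :
    ∑ᶠ n, merge A B n = (∑ᶠ k, A k) + ∑ᶠ k, B k := by
  set l := (((vals A + vals B).sort (· ≤ ·)).reverse) with hl
  have hsub : Function.support (merge A B) ⊆ (Finset.range l.length : Finset ℕ) := by
    intro x hx
    simp only [Finset.coe_range, Set.mem_Iio]
    by_contra hc
    exact hx (List.getD_eq_default _ _ (le_of_not_gt hc))
  rw [finsum_eq_sum_of_support_subset _ hsub]
  have h1 : ∑ i ∈ Finset.range l.length, merge A B i = l.sum := getD_sum l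
  have h2 : l.sum = (vals A + vals B).sum := by
    rw [hl, List.sum_reverse, ← Multiset.sum_coe, Multiset.sort_eq]
  rw [h1, h2, Multiset.sum_add, vals_sum hA, vals_sum hB]

lemma FinSupported.add {A B : ℕ → ℕ} (hA : FinSupported A) (hB : FinSupported B) :
    FinSupported (A + B) := by
  obtain ⟨N, hN⟩ := hA; obtain ⟨M, hM⟩ := hB
  exact ⟨max N M, fun n hn => by
    simp [hN n (le_trans (le_max_left _ _) hn), hM n (le_trans (le_max_right _ _) hn)]⟩

lemma support_finite {A : ℕ → ℕ} (h : FinSupported A) : (Function.support A).Finite := by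
  obtain ⟨N, hN⟩ := h
  apply Set.Finite.subset (Set.finite_Iio N)
  intro x hx
  by_contra hc
  exact hx (hN x (le_of_not_gt (by simpa using hc)))

lemma list_sum_finsum (l : List (ℕ → ℕ)) (h : ∀ f ∈ l, FinSupported f) :
    FinSupported l.sum ∧ ∑ᶠ n, l.sum n = (l.map (fun f => ∑ᶠ n, f n)).sum := by
  induction l with
  | nil => constructor
           · exact ⟨0, fun n _ => rfl⟩
           · simp [finsum_zero]
  | cons f t ih =>
    have hf := h f (List.mem_cons_self)
    obtain ⟨ht1, ht2⟩ := ih (fun g hg => h g (List.mem_cons_of_mem _ hg))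
    have hsum : (f :: t).sum = f + t.sum := by simp
    constructor
    · rw [hsum]; exact hf.add ht1
    · rw [hsum]
      have : ∑ᶠ n, (f + t.sum) n = (∑ᶠ n, f n) + ∑ᶠ n, t.sum n := by
        have := finsum_add_distrib (support_finite hf) (support_finite ht1)
        simpa using this
      rw [this, ht2]; simp

lemma length_le_sum (L : List ℕ) (h : ∀ x ∈ L, 0 < x) : L.length ≤ L.sum := by
  induction L with
  | nil => simp
  | cons a t ih =>
    simp only [List.length_cons, List.sum_cons]
    have := h a (List.mem_cons_self)
    have := ih (fun x hx => h x (List.mem_cons_of_mem _ hx))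
    omega

lemma sum_pred (L : List ℕ) (h : ∀ x ∈ L, 0 < x) :
    (L.map (fun j => j - 1)).sum = L.sum - L.length := by
  induction L with
  | nil => simp
  | cons a t ih =>
    simp only [List.map_cons, List.sum_cons, List.length_cons]
    have ha := h a (List.mem_cons_self)
    have := ih (fun x hx => h x (List.mem_cons_of_mem _ hx))
    have := length_le_sum t (fun x hx => h x (List.mem_cons_of_mem _ hx))
    omega

lemma arith_aux {m n : ℕ} (h1 : 2 ≤ m) (h2 : m ≤ n - 1) (h3 : 3 ≤ n) :
    m - 1 + (n - m) = n - 1 := by omega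

lemma sum_map_mul_left' (q : ℕ) (L : List ℕ) (f : ℕ → ℕ) :
    (L.map (fun j => q * f j)).sum = q * (L.map f).sum := by
  induction L with
  | nil => simp
  | cons a t ih => simp [ih, Nat.mul_add]

/-- if `B` is a Young diagram with `q` blocks and `C` is the minimal 2-fold
operad of Young diagrams generated by `B` (each `C n`, `n ≥ 3`, being the lexicographic
maximum of all merges of products of prior terms over compositions of `n`), then `C n`
has exactly `q * (n - 1)` blocks for every `n ≥ 1`. -/
theorem generated_operad_block_count (B : ℕ → ℕ)
    (hBfin : FinSupported B) (hBanti : Antitone B)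
    (q : ℕ) (hq : ∑ᶠ k, B k = q)
    (C : ℕ → ℕ → ℕ)
    (hCfin : ∀ n, 1 ≤ n → FinSupported (C n))
    (hCanti : ∀ n, 1 ≤ n → Antitone (C n))
    (hC1 : C 1 = fun _ => 0)
    (hC2 : C 2 = B)
    (hCrec : ∀ n, 3 ≤ n →
      (∀ (m : ℕ) (L : List ℕ), 2 ≤ m → m ≤ n - 1 → L.length = m →
          (∀ x ∈ L, 0 < x) → L.sum = n →
          LexLe (merge (C m) (L.map C).sum) (C n)) ∧
      (∃ (m : ℕ) (L : List ℕ), 2 ≤ m ∧ m ≤ n - 1 ∧ L.length = m ∧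
          (∀ x ∈ L, 0 < x) ∧ L.sum = n ∧
          merge (C m) (L.map C).sum = C n)) :
    ∀ n, 1 ≤ n → ∑ᶠ k, C n k = q * (n - 1) := by
  intro n
  induction n using Nat.strong_induction_on with
  | _ n ih =>
    intro hn
    rcases Nat.lt_or_ge n 3 with h3 | h3
    · interval_cases n
      · rw [hC1]; simp
      · rw [hC2, hq]; simp
    · obtain ⟨m, L, hm2, hmn, hLlen, hLpos, hLsum, hmerge⟩ := (hCrec n h3).2
      have hmlt : m < n := by omega
      have hm1 : 1 ≤ m := by omega
      -- every element of L is at least 1 and less than n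
      have hjmem : ∀ j ∈ L, 1 ≤ j ∧ j < n := by
        intro j hj
        refine ⟨hLpos j hj, ?_⟩
        have hperm := List.perm_cons_erase hj
        have hsum' : L.sum = j + (L.erase j).sum := by
          rw [hperm.sum_eq]; simp
        have hlen' : (L.erase j).length + 1 = L.length := by
          have := hperm.length_eq; simp at this; omega
        have hle : (L.erase j).length ≤ (L.erase j).sum := by
          apply length_le_sum
          intro x hx
          exact hLpos x (List.mem_of_mem_erase hx)
        omega
      -- finite support facts
      have hLfin : ∀ f ∈ L.map C, FinSupported f := by
        intro f hf
        obtain ⟨j, hj, rfl⟩ := List.mem_map.mp hf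
        exact hCfin j (hjmem j hj).1
      obtain ⟨hDfin, hDsum⟩ := list_sum_finsum (L.map C) hLfin
      have hCmfin := hCfin m hm1
      rw [← hmerge, merge_finsum hCmfin hDfin, hDsum]
      rw [ih m hmlt hm1]
      have hmap : (L.map C).map (fun f => ∑ᶠ n, f n) = L.map (fun j => q * (j - 1)) := by
        rw [List.map_map]
        apply List.map_congr_left
        intro j hj
        exact ih j (hjmem j hj).2 (hjmem j hj).1
      rw [hmap]
      rw [sum_map_mul_left' q L (fun j => j - 1)]
      rw [sum_pred L hLpos]
      rw [hLsum, hLlen]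
      rw [← Nat.mul_add]
      rw [arith_aux hm2 hmn h3]
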